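/- On a discretized unit line with points at spacing δ and k servers, the configuration placing servers uniformly (at positions (2j−1)/(2k) for j = 1..k) is a best configuration: for every other configuration C and every index i, the i-th smallest distance-to-nearest-server over all points under the uniform configuration is at most the i-th smallest such distance under C. -/

import Mathlib

/-- Distance (in units of `δ`) from grid point `p` to the nearest server in `C`. -/
noncomputable def Dmin (δ : ℝ) (C : Finset ℤ) (p : ℤ) : ℝ :=
  δ * sInf ((fun s : ℤ => |(p : ℝ) - (s : ℝ)|) '' (C : Set ℤ))

/-- The `i`-th smallest (0-indexed) distance-to-nearest-server over all grid
points `0, 1, …, N` (each at spacing `δ`), for server configuration `C`. -/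
noncomputable def nthDist (δ : ℝ) (N : ℤ) (C : Finset ℤ) (i : ℕ) : ℝ :=
  (((Finset.Icc (0 : ℤ) N).val.map (Dmin δ C)).sort (· ≤ ·)).getD i 0

/-- The uniform configuration: `k` servers at positions `(2j−1)/(2k)`,
i.e. at grid points `(2j−1)·m` on the grid `{0, …, 2km}` with spacing
`δ = 1/(2km)`. -/
def uniformConfig (k m : ℕ) : Finset ℤ :=
  Finset.image (fun j : Fin k => (2 * (j : ℤ) + 1) * m) Finset.univ


open Classical in
/-- Key order lemma: in a sorted list, the `i`-th entry is `≤ t` iff more than `i`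
entries are `≤ t`. -/
lemma sorted_get_le_iff {L : List ℝ} (hL : L.Pairwise (· ≤ ·)) {i : ℕ} (hi : i < L.length) (t : ℝ) :
    L.get ⟨i, hi⟩ ≤ t ↔ i < L.countP (fun x => decide (x ≤ t)) := by
  constructor
  · intro h
    have hcount : (L.take (i+1)).countP (fun x => decide (x ≤ t)) = (L.take (i+1)).length := by
      rw [List.countP_eq_length]
      intro a ha
      rw [List.mem_take_iff_getElem] at ha
      obtain ⟨j, hj, rfl⟩ := ha
      simp only [decide_eq_true_iff]
      have hjL : j < L.length := lt_of_lt_of_le hj (min_le_right _ _) |>.trans_le le_rfl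
      have hmono : L.get ⟨j, hjL⟩ ≤ L.get ⟨i, hi⟩ := by
        apply hL.rel_get_of_le
        simp only [Fin.mk_le_mk]
        have := lt_of_lt_of_le hj (min_le_left _ _)
        omega
      calc L[j] = L.get ⟨j, hjL⟩ := rfl
        _ ≤ L.get ⟨i, hi⟩ := hmono
        _ ≤ t := h
    have hsplit := List.countP_append (p := fun x => decide (x ≤ t)) (l₁ := L.take (i+1)) (l₂ := L.drop (i+1))
    rw [List.take_append_drop] at hsplit
    have hlen : (L.take (i+1)).length = i+1 := by rw [List.length_take]; omega
    omega
  · intro h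
    by_contra hgt
    push_neg at hgt
    have hdrop : (L.drop i).countP (fun x => decide (x ≤ t)) = 0 := by
      rw [List.countP_eq_zero]
      intro a ha
      obtain ⟨j, hj, rfl⟩ := List.mem_iff_getElem.mp ha
      simp only [decide_eq_true_iff, not_le]
      have hjL : i + j < L.length := by
        have := hj; rw [List.length_drop] at this; omega
      have : (L.drop i)[j] = L.get ⟨i + j, hjL⟩ := by
        simp [List.getElem_drop]
      rw [this]
      have : L.get ⟨i, hi⟩ ≤ L.get ⟨i + j, hjL⟩ := by
        apply hL.rel_get_of_le; simp only [Fin.mk_le_mk]; omega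
      linarith
    have hsplit := List.countP_append (p := fun x => decide (x ≤ t)) (l₁ := L.take i) (l₂ := L.drop i)
    rw [List.take_append_drop] at hsplit
    have := List.countP_le_length (p := fun x => decide (x ≤ t)) (l := L.take i)
    have hlen : (L.take i).length = i := by rw [List.length_take]; omega
    omega

open Classical in
/-- Pointwise domination of sorted sequences from domination of counting functions. -/
lemma sorted_dominates {L1 L2 : List ℝ} (h1 : L1.Pairwise (· ≤ ·)) (h2 : L2.Pairwise (· ≤ ·))
    (hlen : L1.length = L2.length)
    (hcount : ∀ t ∈ L2, L2.countP (fun x => decide (x ≤ t)) ≤ L1.countP (fun x => decide (x ≤ t))) :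
    ∀ i : ℕ, L1.getD i 0 ≤ L2.getD i 0 := by
  intro i
  by_cases hi : i < L2.length
  · have hi1 : i < L1.length := by omega
    rw [List.getD_eq_getElem L1 0 hi1, List.getD_eq_getElem L2 0 hi]
    set t := L2[i] with ht
    have hmem : t ∈ L2 := List.getElem_mem hi
    have h2i : i < L2.countP (fun x => decide (x ≤ t)) :=
      (sorted_get_le_iff h2 hi t).mp le_rfl
    exact (sorted_get_le_iff h1 hi1 t).mpr (lt_of_lt_of_le h2i (hcount t hmem))
  · rw [List.getD_eq_default L1 0 (by omega), List.getD_eq_default L2 0 (by omega)]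

lemma Dmin_eq (δ : ℝ) {C : Finset ℤ} (hC : C.Nonempty) (p : ℤ) :
    Dmin δ C p = δ * (((C.image fun s => |p - s|).min' (hC.image _) : ℤ) : ℝ) := by
  unfold Dmin
  congr 1
  have hfun : (fun s : ℤ => |(p : ℝ) - (s : ℝ)|) = fun s : ℤ => ((|p - s| : ℤ) : ℝ) := by
    funext s; push_cast; ring_nf
  rw [hfun]
  have himg : (fun s : ℤ => ((|p - s| : ℤ) : ℝ)) '' (C : Set ℤ)
      = (fun n : ℤ => (n : ℝ)) '' ((C.image fun s => |p - s|) : Set ℤ) := by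
    rw [Finset.coe_image, Set.image_image]
  rw [himg, ← Finset.coe_image, Finset.Nonempty.csInf_eq_min' ((hC.image _).image _),
    Finset.min'_image (f := fun n : ℤ => (n : ℝ)) Int.cast_mono]

lemma Dmin_nonneg_val {C : Finset ℤ} (hC : C.Nonempty) (p : ℤ) :
    0 ≤ (C.image fun s => |p - s|).min' (hC.image _) := by
  obtain ⟨s, _, hs⟩ := Finset.mem_image.mp ((C.image fun s => |p - s|).min'_mem (hC.image _))
  rw [← hs]; exact abs_nonneg _

lemma Dmin_le_iff {δ : ℝ} (hδ : 0 < δ) {C : Finset ℤ} (hC : C.Nonempty) (p d : ℤ) :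
    Dmin δ C p ≤ δ * (d : ℝ) ↔ ∃ s ∈ C, |p - s| ≤ d := by
  rw [Dmin_eq δ hC p, mul_le_mul_iff_right₀ hδ, Int.cast_le]
  constructor
  · intro h
    obtain ⟨s, hs, hsv⟩ := Finset.mem_image.mp ((C.image fun s => |p - s|).min'_mem (hC.image _))
    exact ⟨s, hs, by rw [hsv]; exact h⟩
  · rintro ⟨s, hs, hsd⟩
    exact le_trans (Finset.min'_le _ _ (Finset.mem_image_of_mem _ hs)) hsd

open Classical

lemma mem_uniformConfig {k m : ℕ} {s : ℤ} :
    s ∈ uniformConfig k m ↔ ∃ j : ℤ, 0 ≤ j ∧ j < k ∧ s = (2 * j + 1) * m := by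
  simp only [uniformConfig, Finset.mem_image, Finset.mem_univ, true_and]
  constructor
  · rintro ⟨j, rfl⟩
    exact ⟨(j : ℤ), by positivity, by exact_mod_cast j.2, rfl⟩
  · rintro ⟨j, hj0, hjk, rfl⟩
    exact ⟨⟨j.toNat, by omega⟩, by simp; omega⟩

lemma uniformConfig_card {k m : ℕ} (hm : 0 < m) : (uniformConfig k m).card = k := by
  rw [uniformConfig, Finset.card_image_of_injective _ (fun a b hab => ?_), Finset.card_univ,
    Fintype.card_fin]
  have : (a : ℤ) = b := by
    have hm' : (0 : ℤ) < m := by exact_mod_cast hm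
    have := mul_right_cancel₀ (by omega : (m : ℤ) ≠ 0) hab
    omega
  exact Fin.ext (by exact_mod_cast this)

open Classical in
lemma count_core (k m : ℕ) (hk : 0 < k) (hm : 0 < m) (C : Finset ℤ) (hCcard : C.card = k)
    (d : ℤ) (hd : 0 ≤ d) :
    ((Finset.Icc (0:ℤ) (2*k*m)).filter (fun p => ∃ s ∈ C, |p - s| ≤ d)).card
      ≤ ((Finset.Icc (0:ℤ) (2*k*m)).filter (fun p => ∃ s ∈ uniformConfig k m, |p - s| ≤ d)).card := by
  have hm' : (0 : ℤ) < m := by exact_mod_cast hm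
  have hk' : (0 : ℤ) < k := by exact_mod_cast hk
  by_cases hdm : (m : ℤ) ≤ d
  · -- full coverage by the uniform configuration
    have hfull : (Finset.Icc (0:ℤ) (2*k*m)).filter
        (fun p => ∃ s ∈ uniformConfig k m, |p - s| ≤ d) = Finset.Icc (0:ℤ) (2*k*m) := by
      apply Finset.filter_true_of_mem
      intro p hp
      rw [Finset.mem_Icc] at hp
      set q := p / (2 * (m : ℤ)) with hq
      have hqe := Int.mul_ediv_add_emod p (2 * (m : ℤ))
      have hr0 : 0 ≤ p % (2 * (m : ℤ)) := Int.emod_nonneg p (by omega)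
      have hr1 : p % (2 * (m : ℤ)) < 2 * m := Int.emod_lt_of_pos p (by omega)
      have hq0 : 0 ≤ q := Int.ediv_nonneg hp.1 (by omega)
      refine ⟨(2 * (min ((k : ℤ) - 1) q) + 1) * m, mem_uniformConfig.mpr
        ⟨min ((k : ℤ) - 1) q, le_min (by omega) hq0, by omega, rfl⟩, ?_⟩
      rw [abs_le]
      rcases le_total q ((k : ℤ) - 1) with h | h
      · rw [min_eq_right h]
        have key : p - (2 * q + 1) * m = p % (2 * m) - m := by linear_combination -hqe
        omega
      · rw [min_eq_left h]
        have hge : 2 * (m : ℤ) * ((k : ℤ) - 1) ≤ 2 * m * q :=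
          mul_le_mul_of_nonneg_left h (by omega)
        constructor <;> nlinarith [hp.1, hp.2]
    rw [hfull]
    exact Finset.card_filter_le _ _
  · push_neg at hdm
    -- bound card of an interval
    have hIcc : ∀ s : ℤ, (Finset.Icc (s - d) (s + d)).card = (2 * d + 1).toNat := by
      intro s; rw [Int.card_Icc]; congr 1; ring
    -- C side: at most k * (2d+1)
    have hsub : (Finset.Icc (0:ℤ) (2*k*m)).filter (fun p => ∃ s ∈ C, |p - s| ≤ d)
        ⊆ C.biUnion (fun s => Finset.Icc (s - d) (s + d)) := by
      intro p hp
      rw [Finset.mem_filter] at hp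
      obtain ⟨-, s, hs, hsd⟩ := hp
      rw [abs_le] at hsd
      exact Finset.mem_biUnion.mpr ⟨s, hs, Finset.mem_Icc.mpr ⟨by omega, by omega⟩⟩
    have hCbound : ((Finset.Icc (0:ℤ) (2*k*m)).filter (fun p => ∃ s ∈ C, |p - s| ≤ d)).card
        ≤ k * (2 * d + 1).toNat := by
      refine le_trans (Finset.card_le_card hsub) (le_trans Finset.card_biUnion_le ?_)
      rw [Finset.sum_congr rfl (fun s _ => hIcc s), Finset.sum_const, hCcard, smul_eq_mul]
    -- U side: exactly k * (2d+1)
    have hUeq : (Finset.Icc (0:ℤ) (2*k*m)).filter (fun p => ∃ s ∈ uniformConfig k m, |p - s| ≤ d)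
        = (uniformConfig k m).biUnion (fun s => Finset.Icc (s - d) (s + d)) := by
      ext p
      simp only [Finset.mem_filter, Finset.mem_biUnion, Finset.mem_Icc]
      constructor
      · rintro ⟨-, s, hs, hsd⟩
        rw [abs_le] at hsd
        exact ⟨s, hs, by omega, by omega⟩
      · rintro ⟨s, hs, h1, h2⟩
        obtain ⟨j, hj0, hjk, rfl⟩ := mem_uniformConfig.mp hs
        refine ⟨⟨?_, ?_⟩, (2 * j + 1) * m, hs, by rw [abs_le]; omega⟩
        · nlinarith
        · nlinarith
    have hUcard : ((Finset.Icc (0:ℤ) (2*k*m)).filter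
        (fun p => ∃ s ∈ uniformConfig k m, |p - s| ≤ d)).card = k * (2 * d + 1).toNat := by
      rw [hUeq, Finset.card_biUnion, Finset.sum_congr rfl (fun s _ => hIcc s),
        Finset.sum_const, uniformConfig_card hm, smul_eq_mul]
      intro x hx y hy hxy
      obtain ⟨j, hj0, hjk, rfl⟩ := mem_uniformConfig.mp hx
      obtain ⟨j', hj0', hjk', rfl⟩ := mem_uniformConfig.mp hy
      have hjj : j ≠ j' := by
        intro h; exact hxy (by rw [h])
      rw [Function.onFun_apply, Finset.disjoint_left]
      intro p hp hp'
      rw [Finset.mem_Icc] at hp hp'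
      have h1 : |(2 * j + 1) * m - (2 * j' + 1) * m| ≤ 2 * d := by rw [abs_le]; omega
      have h2 : (2 * j + 1) * (m : ℤ) - (2 * j' + 1) * m = 2 * m * (j - j') := by ring
      rw [h2, abs_mul] at h1
      have h3 : (1 : ℤ) ≤ |j - j'| := by
        rcases lt_or_gt_of_ne hjj with h | h
        · rw [abs_of_neg (by omega)]; omega
        · rw [abs_of_pos (by omega)]; omega
      have h4 : |2 * (m : ℤ)| = 2 * m := abs_of_pos (by omega)
      nlinarith
    omega

/-- Conversion: count of sorted distance list below an integer threshold equals a
Finset filter cardinality. -/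
lemma countP_sort_eq {δ : ℝ} (hδ : 0 < δ) (N : ℤ) {C : Finset ℤ} (hC : C.Nonempty) (d : ℤ) :
    ((((Finset.Icc (0 : ℤ) N).val.map (Dmin δ C)).sort (· ≤ ·)).countP
        (fun x => decide (x ≤ δ * (d : ℝ))))
      = ((Finset.Icc (0 : ℤ) N).filter (fun p => ∃ s ∈ C, |p - s| ≤ d)).card := by
  have h1 := Multiset.coe_countP (fun x : ℝ => x ≤ δ * (d : ℝ))
    (((Finset.Icc (0 : ℤ) N).val.map (Dmin δ C)).sort (· ≤ ·))
  rw [Multiset.sort_eq] at h1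
  rw [← h1, Multiset.countP_map]
  have h2 : (Finset.Icc (0 : ℤ) N).filter (fun p => Dmin δ C p ≤ δ * (d : ℝ))
      = (Finset.Icc (0 : ℤ) N).filter (fun p => ∃ s ∈ C, |p - s| ≤ d) :=
    Finset.filter_congr (fun p _ => Dmin_le_iff hδ hC p d)
  calc Multiset.card (Multiset.filter (fun a => Dmin δ C a ≤ δ * (d : ℝ)) (Finset.Icc (0 : ℤ) N).val)
      = ((Finset.Icc (0 : ℤ) N).filter (fun p => Dmin δ C p ≤ δ * (d : ℝ))).card := by
        rw [Finset.card_def, Finset.filter_val]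
    _ = _ := by rw [h2]


/-- On the discretized unit line, the uniform configuration is a best
configuration: its sorted distance sequence is pointwise at most that of any
configuration `C` of `k` servers. -/
theorem uniform_is_best_configuration
    (k m : ℕ) (hk : 0 < k) (hm : 0 < m)
    (C : Finset ℤ) (hCcard : C.card = k)
    (hCsub : C ⊆ Finset.Icc (0 : ℤ) (2 * k * m)) :
    ∀ i : ℕ,
      nthDist (1 / (2 * k * m)) (2 * k * m) (uniformConfig k m) i
        ≤ nthDist (1 / (2 * k * m)) (2 * k * m) C i := by
  set δ : ℝ := 1 / (2 * k * m) with hδdef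
  have hδ : 0 < δ := by
    rw [hδdef]
    have : (0 : ℝ) < 2 * k * m := by
      have : (0 : ℕ) < 2 * k * m := by positivity
      exact_mod_cast this
    positivity
  have hCne : C.Nonempty := Finset.card_pos.mp (by omega)
  have hUne : (uniformConfig k m).Nonempty := by
    refine ⟨(2 * ((⟨0, hk⟩ : Fin k) : ℤ) + 1) * m,
      Finset.mem_image.mpr ⟨⟨0, hk⟩, Finset.mem_univ _, rfl⟩⟩
  unfold nthDist
  apply sorted_dominates (Multiset.pairwise_sort _ _) (Multiset.pairwise_sort _ _)
  · rw [Multiset.length_sort, Multiset.length_sort, Multiset.card_map, Multiset.card_map]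
  · intro t ht
    rw [Multiset.mem_sort] at ht
    obtain ⟨p₀, hp₀, rfl⟩ := Multiset.mem_map.mp ht
    have htval := Dmin_eq δ hCne p₀
    set d : ℤ := (C.image fun s => |p₀ - s|).min' (hCne.image _) with hd
    have hd0 : (0 : ℤ) ≤ d := Dmin_nonneg_val hCne p₀
    rw [htval, countP_sort_eq hδ _ hCne d, countP_sort_eq hδ _ hUne d]
    exact count_core k m hk hm C hCcard d hd0
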